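/- Let {A_n} be a sequence of d_n × d_n matrices with d_n → ∞. Suppose A_n = R_n + N_n where rank(R_n)/d_n → 0 and the spectral norm ‖N_n‖ → 0. Then for every continuous compactly supported F : ℝ → ℂ, (1/d_n) ∑_{i=1}^{d_n} F(σ_i(A_n)) → F(0), i.e., {A_n} is zero-distributed in the sense of singular values. -/

import Mathlib

noncomputable def singVals {n : ℕ} (A : Matrix (Fin n) (Fin n) ℂ) : Fin n → ℝ :=
  fun i => Real.sqrt ((Matrix.isHermitian_conjTranspose_mul_self A).eigenvalues i)

open Matrix Module Finset

lemma toEuclideanLin_mul_apply {m : ℕ} (M N : Matrix (Fin m) (Fin m) ℂ)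
    (x : EuclideanSpace ℂ (Fin m)) :
    Matrix.toEuclideanLin (M * N) x = Matrix.toEuclideanLin M (Matrix.toEuclideanLin N x) := by
  simp [Matrix.toEuclideanLin_apply, Matrix.mulVec_mulVec]

lemma toEuclideanLin_eigen {m : ℕ} {A : Matrix (Fin m) (Fin m) ℂ} (hA : A.IsHermitian)
    (i : Fin m) :
    Matrix.toEuclideanLin A (hA.eigenvectorBasis i)
      = (hA.eigenvalues i : ℂ) • hA.eigenvectorBasis i := by
  have h := hA.mulVec_eigenvectorBasis i
  ext j
  have := congrFun h j
  simpa [Matrix.toEuclideanLin_apply, Complex.real_smul] using this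

lemma sv_count {m : ℕ} (A R Z : Matrix (Fin m) (Fin m) ℂ) (hAZ : A = R + Z)
    {ε : ℝ} (hε : 0 < ε) (hZ : ‖Matrix.toEuclideanCLM (𝕜 := ℂ) Z‖ < ε) :
    (Finset.univ.filter (fun i => ε < singVals A i)).card ≤ R.rank := by
  classical
  set hH := Matrix.isHermitian_conjTranspose_mul_self A with hHdef
  set b := hH.eigenvectorBasis with hbdef
  set μ := hH.eigenvalues with hμdef
  set s : Finset (Fin m) := Finset.univ.filter (fun i => ε ^ 2 < μ i) with hsdef
  have hsub : Finset.univ.filter (fun i => ε < singVals A i) ⊆ s := by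
    intro i hi
    simp only [hsdef, Finset.mem_filter, Finset.mem_univ, true_and] at hi ⊢
    exact (Real.lt_sqrt hε.le).mp hi
  refine le_trans (Finset.card_le_card hsub) ?_
  by_contra hlt
  push_neg at hlt
  -- subspaces
  set E : Submodule ℂ (EuclideanSpace ℂ (Fin m)) := Submodule.span ℂ (⇑b '' ↑s) with hEdef
  set K : Submodule ℂ (EuclideanSpace ℂ (Fin m)) :=
    LinearMap.ker (Matrix.toEuclideanLin R) with hKdef
  have hli : LinearIndependent ℂ (fun i : ↥(↑s : Set (Fin m)) => b i) :=
    b.orthonormal.linearIndependent.comp _ Subtype.val_injective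
  have hE : finrank ℂ E = s.card := by
    rw [hEdef, Set.image_eq_range, finrank_span_eq_card hli]
    simp
  have hK : R.rank + finrank ℂ K = m := by
    have h1 := LinearMap.finrank_range_add_finrank_ker (Matrix.toEuclideanLin R)
    rw [finrank_euclideanSpace, Fintype.card_fin] at h1
    have h2 : R.rank = finrank ℂ ↥(LinearMap.range (Matrix.toEuclideanLin R)) := by
      rw [Matrix.rank_eq_finrank_range_toLin R (PiLp.basisFun 2 ℂ (Fin m))
        (PiLp.basisFun 2 ℂ (Fin m)), ← Matrix.toEuclideanLin_eq_toLin]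
    rw [hKdef, h2, h1]
  have hsup : finrank ℂ ↥(E ⊔ K) ≤ m := by
    refine le_trans (Submodule.finrank_le _) ?_
    rw [finrank_euclideanSpace, Fintype.card_fin]
  have hinf : 0 < finrank ℂ ↥(E ⊓ K) := by
    have h2 := Submodule.finrank_sup_add_finrank_inf_eq E K
    omega
  obtain ⟨x, hxmem, hx0⟩ : ∃ x ∈ E ⊓ K, x ≠ 0 := by
    rw [← Submodule.ne_bot_iff]
    intro h
    rw [h] at hinf
    simp at hinf
  have hxE : x ∈ E := hxmem.1
  have hxK : x ∈ K := hxmem.2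
  set c : Fin m → ℂ := fun i => b.repr x i with hcdef
  -- coefficients vanish off s
  have hcs : ∀ j ∉ s, c j = 0 := by
    intro j hj
    rw [hcdef]
    simp only
    rw [b.repr_apply_apply]
    refine Submodule.span_induction (p := fun y _ => (inner ℂ (b j) y : ℂ) = 0) ?_ ?_ ?_ ?_ hxE
    · rintro y ⟨i, hi, rfl⟩
      refine b.orthonormal.2 ?_
      rintro rfl
      exact hj (by simpa using hi)
    · simp
    · intro y z _ _ hy hz
      rw [inner_add_right, hy, hz, add_zero]
    · intro a y _ hy
      rw [inner_smul_right, hy, mul_zero]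
  have hxsum : x = ∑ i ∈ s, c i • b i := by
    have h1 := b.sum_repr x
    rw [← h1]
    symm
    refine Finset.sum_subset (Finset.subset_univ s) ?_
    intro i _ hi
    rw [hcs i hi, zero_smul]
  set T := Matrix.toEuclideanLin A with hTdef
  -- quadratic form, upper bound side
  have hTx : T x = Matrix.toEuclideanLin Z x := by
    rw [hTdef, hAZ, map_add, LinearMap.add_apply,
      LinearMap.mem_ker.mp hxK, zero_add]
  have hxpos : (0 : ℝ) < ‖x‖ := norm_pos_iff.mpr hx0
  have hTxlt : ‖T x‖ < ε * ‖x‖ := by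
    rw [hTx]
    have h1 : Matrix.toEuclideanLin Z x = Matrix.toEuclideanCLM (𝕜 := ℂ) Z x := by
      rw [← Matrix.coe_toEuclideanCLM_eq_toEuclideanLin]
      rfl
    rw [h1]
    calc ‖Matrix.toEuclideanCLM (𝕜 := ℂ) Z x‖
        ≤ ‖Matrix.toEuclideanCLM (𝕜 := ℂ) Z‖ * ‖x‖ :=
          ContinuousLinearMap.le_opNorm _ _
      _ < ε * ‖x‖ := by exact mul_lt_mul_of_pos_right hZ hxpos
  -- quadratic form equalities
  have hHx : Matrix.toEuclideanLin (Aᴴ * A) x = ∑ i ∈ s, ((μ i : ℂ) * c i) • b i := by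
    conv_lhs => rw [hxsum]
    rw [map_sum]
    refine Finset.sum_congr rfl ?_
    intro i _
    rw [_root_.map_smul, toEuclideanLin_eigen hH i, smul_smul, mul_comm]
  have key1 : (inner ℂ x (Matrix.toEuclideanLin (Aᴴ * A) x) : ℂ)
      = ∑ i ∈ s, (starRingEnd ℂ) (c i) * ((μ i : ℂ) * c i) := by
    rw [hHx]
    conv_lhs => rw [hxsum]
    exact b.orthonormal.inner_sum _ _ s
  have key2 : (inner ℂ x (Matrix.toEuclideanLin (Aᴴ * A) x) : ℂ) = ((‖T x‖ ^ 2 : ℝ) : ℂ) := by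
    have h1 : Matrix.toEuclideanLin (Aᴴ * A) x
        = Matrix.toEuclideanLin Aᴴ (T x) := toEuclideanLin_mul_apply _ _ _
    rw [h1, Matrix.toEuclideanLin_conjTranspose_eq_adjoint, ← hTdef,
      LinearMap.adjoint_inner_right]
    exact_mod_cast inner_self_eq_norm_sq_to_K (𝕜 := ℂ) (x := T x)
  have hreal : ‖T x‖ ^ 2 = ∑ i ∈ s, μ i * ‖c i‖ ^ 2 := by
    have h1 : ((‖T x‖ ^ 2 : ℝ) : ℂ) = ((∑ i ∈ s, μ i * ‖c i‖ ^ 2 : ℝ) : ℂ) := by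
      rw [← key2, key1]
      push_cast
      refine Finset.sum_congr rfl fun i _ => ?_
      rw [show (starRingEnd ℂ) (c i) * ((μ i : ℂ) * c i)
          = (μ i : ℂ) * ((starRingEnd ℂ) (c i) * c i) by ring, RCLike.conj_mul]
      push_cast
      rfl
    exact_mod_cast h1
  -- ‖x‖² = ∑ over s
  have hxnorm : ‖x‖ ^ 2 = ∑ i ∈ s, ‖c i‖ ^ 2 := by
    have h1 : (inner ℂ x x : ℂ) = ∑ i ∈ s, (starRingEnd ℂ) (c i) * c i := by
      conv_lhs => rw [hxsum]
      exact b.orthonormal.inner_sum _ _ s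
    have h2 : ((‖x‖ ^ 2 : ℝ) : ℂ) = ((∑ i ∈ s, ‖c i‖ ^ 2 : ℝ) : ℂ) := by
      have h3 : ((‖x‖ ^ 2 : ℝ) : ℂ) = (inner ℂ x x : ℂ) := by
        exact_mod_cast (inner_self_eq_norm_sq_to_K (𝕜 := ℂ) (x := x)).symm
      rw [h3, h1]
      push_cast
      refine Finset.sum_congr rfl fun i _ => ?_
      rw [RCLike.conj_mul]
      norm_cast
    exact_mod_cast h2
  -- lower bound
  obtain ⟨i₀, hi₀s, hi₀⟩ : ∃ i ∈ s, c i ≠ 0 := by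
    by_contra h
    push_neg at h
    apply hx0
    rw [hxsum]
    exact Finset.sum_eq_zero fun i hi => by rw [h i hi, zero_smul]
  have hlow : ε ^ 2 * ‖x‖ ^ 2 < ∑ i ∈ s, μ i * ‖c i‖ ^ 2 := by
    rw [hxnorm, Finset.mul_sum]
    refine Finset.sum_lt_sum ?_ ⟨i₀, hi₀s, ?_⟩
    · intro i hi
      have : ε ^ 2 < μ i := by
        simpa [hsdef] using hi
      exact mul_le_mul_of_nonneg_right this.le (by positivity)
    · have h1 : ε ^ 2 < μ i₀ := by simpa [hsdef] using hi₀s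
      have h2 : (0 : ℝ) < ‖c i₀‖ ^ 2 := by
        have := norm_pos_iff.mpr hi₀
        positivity
      exact mul_lt_mul_of_pos_right h1 h2
  have hup : ‖T x‖ ^ 2 < ε ^ 2 * ‖x‖ ^ 2 := by
    have h1 : ‖T x‖ ^ 2 < (ε * ‖x‖) ^ 2 :=
      pow_lt_pow_left₀ hTxlt (norm_nonneg _) two_ne_zero
    calc ‖T x‖ ^ 2 < (ε * ‖x‖) ^ 2 := h1
      _ = ε ^ 2 * ‖x‖ ^ 2 := by ring
  rw [hreal] at hup
  linarith

theorem stmt16 (d : ℕ → ℕ) (hd : Filter.Tendsto d Filter.atTop Filter.atTop)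
    (A R Z : (n : ℕ) → Matrix (Fin (d n)) (Fin (d n)) ℂ)
    (hdecomp : ∀ n, A n = R n + Z n)
    (hrank : Filter.Tendsto (fun n => ((R n).rank : ℝ) / (d n : ℝ)) Filter.atTop (nhds 0))
    (hnorm : Filter.Tendsto (fun n => ‖Matrix.toEuclideanCLM (𝕜 := ℂ) (Z n)‖)
      Filter.atTop (nhds 0))
    (F : ℝ → ℂ) (hF : Continuous F) (hFsupp : HasCompactSupport F) :
    Filter.Tendsto (fun n => (1 / (d n : ℂ)) * ∑ i, F (singVals (A n) i))
      Filter.atTop (nhds (F 0)) := by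
  classical
  obtain ⟨M₀, hM₀⟩ := hFsupp.exists_bound_of_continuous hF
  set M : ℝ := max M₀ 1 with hMdef
  have hM1 : (1 : ℝ) ≤ M := le_max_right _ _
  have hM0 : (0 : ℝ) < M := lt_of_lt_of_le one_pos hM1
  have hM : ∀ x, ‖F x‖ ≤ M := fun x => le_trans (hM₀ x) (le_max_left _ _)
  rw [Metric.tendsto_atTop]
  intro ε hε
  have hUC := hFsupp.uniformContinuous_of_continuous hF
  rw [Metric.uniformContinuous_iff] at hUC
  obtain ⟨δ, hδ, hδ'⟩ := hUC (ε / 2) (by positivity)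
  have h1 : ∀ᶠ n in Filter.atTop, ‖Matrix.toEuclideanCLM (𝕜 := ℂ) (Z n)‖ < δ / 2 :=
    hnorm.eventually_lt_const (by positivity)
  have h2 : ∀ᶠ n in Filter.atTop, ((R n).rank : ℝ) / (d n : ℝ) < ε / (4 * M) :=
    hrank.eventually_lt_const (by positivity)
  have h3 : ∀ᶠ n in Filter.atTop, 1 ≤ d n := hd.eventually_ge_atTop 1
  obtain ⟨N, hN⟩ := Filter.eventually_atTop.mp ((h1.and h2).and h3)
  refine ⟨N, fun n hn => ?_⟩
  obtain ⟨⟨hZn, hRn⟩, hdn⟩ := hN n hn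
  have hd0 : (0 : ℝ) < (d n : ℝ) := by exact_mod_cast hdn
  have hdC : ((d n : ℕ) : ℂ) ≠ 0 := Nat.cast_ne_zero.mpr (by omega)
  have hσnn : ∀ i, 0 ≤ singVals (A n) i := fun i => Real.sqrt_nonneg _
  have hcard : (Finset.univ.filter (fun i => δ / 2 < singVals (A n) i)).card ≤ (R n).rank :=
    sv_count (A n) (R n) (Z n) (hdecomp n) (by positivity) hZn
  rw [dist_eq_norm]
  have halg : (1 / (d n : ℂ)) * ∑ i, F (singVals (A n) i) - F 0
      = (1 / (d n : ℂ)) * ∑ i, (F (singVals (A n) i) - F 0) := by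
    rw [Finset.sum_sub_distrib, Finset.sum_const, Finset.card_univ, Fintype.card_fin,
      nsmul_eq_mul, mul_sub]
    congr 1
    field_simp
  rw [halg]
  rw [norm_mul]
  have hnorm1 : ‖(1 / (d n : ℂ))‖ = 1 / (d n : ℝ) := by
    rw [norm_div, norm_one, Complex.norm_natCast]
  rw [hnorm1]
  have hbig : ∑ i ∈ Finset.univ.filter (fun i => δ / 2 < singVals (A n) i),
      ‖F (singVals (A n) i) - F 0‖ ≤ ((R n).rank : ℝ) * (2 * M) := by
    refine le_trans (Finset.sum_le_card_nsmul _ _ (2 * M) ?_) ?_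
    · intro i _
      calc ‖F (singVals (A n) i) - F 0‖ ≤ ‖F (singVals (A n) i)‖ + ‖F 0‖ := norm_sub_le _ _
        _ ≤ M + M := add_le_add (hM _) (hM _)
        _ = 2 * M := by ring
    · rw [nsmul_eq_mul]
      refine mul_le_mul_of_nonneg_right ?_ (by positivity)
      exact_mod_cast hcard
  have hsmall : ∑ i ∈ Finset.univ.filter (fun i => ¬ δ / 2 < singVals (A n) i),
      ‖F (singVals (A n) i) - F 0‖ ≤ (d n : ℝ) * (ε / 2) := by
    refine le_trans (Finset.sum_le_card_nsmul _ _ (ε / 2) ?_) ?_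
    · intro i hi
      simp only [Finset.mem_filter, Finset.mem_univ, true_and, not_lt] at hi
      have hdist : dist (singVals (A n) i) 0 < δ := by
        rw [Real.dist_eq, sub_zero, abs_of_nonneg (hσnn i)]
        linarith
      have := hδ' hdist
      rw [dist_eq_norm] at this
      exact this.le
    · rw [nsmul_eq_mul]
      refine mul_le_mul_of_nonneg_right ?_ (by positivity)
      have hle : (Finset.univ.filter (fun i => ¬ δ / 2 < singVals (A n) i)).card ≤ d n := by
        refine le_trans (Finset.card_filter_le _ _) ?_
        rw [Finset.card_univ, Fintype.card_fin]
      exact_mod_cast hle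
  have hsumb : ‖∑ i, (F (singVals (A n) i) - F 0)‖
      ≤ (d n : ℝ) * (ε / 2) + ((R n).rank : ℝ) * (2 * M) := by
    refine le_trans (norm_sum_le _ _) ?_
    rw [← Finset.sum_filter_add_sum_filter_not Finset.univ
      (fun i => δ / 2 < singVals (A n) i) (fun i => ‖F (singVals (A n) i) - F 0‖)]
    calc _ ≤ ((R n).rank : ℝ) * (2 * M) + (d n : ℝ) * (ε / 2) := add_le_add hbig hsmall
      _ = _ := by ring
  calc (1 / (d n : ℝ)) * ‖∑ i, (F (singVals (A n) i) - F 0)‖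
      ≤ (1 / (d n : ℝ)) * ((d n : ℝ) * (ε / 2) + ((R n).rank : ℝ) * (2 * M)) :=
        mul_le_mul_of_nonneg_left hsumb (by positivity)
    _ = ε / 2 + (((R n).rank : ℝ) / (d n : ℝ)) * (2 * M) := by
        field_simp
    _ < ε / 2 + ε / 2 := by
        have h5 : (((R n).rank : ℝ) / (d n : ℝ)) * (2 * M) < (ε / (4 * M)) * (2 * M) :=
          mul_lt_mul_of_pos_right hRn (by positivity)
        have h6 : (ε / (4 * M)) * (2 * M) = ε / 2 := by
          field_simp
          ring
        linarith
    _ = ε := by ring
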